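/- For a group G and a field k, the structure (R(k,G), +, ⋆) is a left near-ring: (R(k,G), +) is an abelian group, (R(k,G), ⋆) is a monoid, and right distributivity (α + β) ⋆ γ = α ⋆ γ + β ⋆ γ holds for all α, β, γ ∈ R(k,G). -/

import Mathlib

open MvPolynomial

/-- The multiplication `⋆` on `R(k,G) = k[X_g : g ∈ G]`. -/
noncomputable def RkGmul {k : Type} [Field k] {G : Type} [Group G]
    (α β : MvPolynomial G k) : MvPolynomial G k :=
  MvPolynomial.aeval (fun g : G => MvPolynomial.rename (fun h : G => g * h) β) α

lemma RkGmul_key {k : Type} [Field k] {G : Type} [Group G] (g : G)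
    (β γ : MvPolynomial G k) :
    MvPolynomial.aeval (fun h : G => MvPolynomial.rename (fun x : G => h * x) γ)
      (MvPolynomial.rename (fun h : G => g * h) β)
    = MvPolynomial.rename (fun h : G => g * h)
      (MvPolynomial.aeval (fun h : G => MvPolynomial.rename (fun x : G => h * x) γ) β) := by
  simp only [aeval_eq_bind₁, bind₁_rename, rename_bind₁, rename_rename]
  have : ((fun h : G => MvPolynomial.rename (fun x : G => h * x) γ) ∘ fun h : G => g * h)
      = fun i : G => MvPolynomial.rename ((fun h : G => g * h) ∘ fun x : G => i * x) γ := by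
    funext i
    have hfun : ((fun h : G => g * h) ∘ fun x : G => i * x) = fun x : G => g * i * x := by
      funext x; simp [mul_assoc]
    rw [hfun]
    simp [Function.comp, mul_assoc]
  rw [this]

/-- `(R(k,G), +, ⋆)` is a left near-ring: `(R(k,G), +)` is an abelian group
(this is structural for `MvPolynomial`, we record commutativity of `+`),
`(R(k,G), ⋆)` is a monoid with identity `X_{1_G}`, and right distributivity
`(α + β) ⋆ γ = α ⋆ γ + β ⋆ γ` holds. -/
theorem RkG_left_near_ring {k : Type} [Field k] {G : Type} [Group G] :
    (∀ α β : MvPolynomial G k, α + β = β + α) ∧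
    (∀ α β γ : MvPolynomial G k, RkGmul (RkGmul α β) γ = RkGmul α (RkGmul β γ)) ∧
    (∀ α : MvPolynomial G k, RkGmul (MvPolynomial.X (1 : G)) α = α) ∧
    (∀ α : MvPolynomial G k, RkGmul α (MvPolynomial.X (1 : G)) = α) ∧
    (∀ α β γ : MvPolynomial G k, RkGmul (α + β) γ = RkGmul α γ + RkGmul β γ) := by
  refine ⟨fun α β => add_comm α β, ?_, ?_, ?_, ?_⟩
  · intro α β γ
    unfold RkGmul
    simp only [aeval_eq_bind₁, bind₁_bind₁]
    have : (fun i : G => MvPolynomial.bind₁ (fun g : G => MvPolynomial.rename (fun h : G => g * h) γ) (MvPolynomial.rename (fun h : G => i * h) β))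
        = fun g : G => MvPolynomial.rename (fun h : G => g * h) (MvPolynomial.bind₁ (fun g : G => MvPolynomial.rename (fun h : G => g * h) γ) β) := by
      funext g
      have := RkGmul_key g β γ
      simpa only [aeval_eq_bind₁] using this
    rw [this]
  · intro α
    unfold RkGmul
    rw [aeval_X]
    have : (fun h : G => (1 : G) * h) = id := by funext h; simp
    rw [this, rename_id, AlgHom.id_apply]
  · intro α
    unfold RkGmul
    have : ∀ g : G, MvPolynomial.rename (fun h : G => g * h) (MvPolynomial.X (1 : G) : MvPolynomial G k) = MvPolynomial.X g := by
      intro g; rw [rename_X]; simp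
    simp only [this]
    exact aeval_X_left_apply α
  · intro α β γ
    unfold RkGmul
    exact map_add _ α β
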